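/- Suppose Assumption 1 (full rank) holds. Then the conditional log-likelihood β ↦ log L(β) is strictly concave on ℝ^p: for all β₁ ≠ β₂ in ℝ^p and all λ ∈ (0,1), log L(λβ₁ + (1−λ)β₂) > λ log L(β₁) + (1−λ) log L(β₂). -/

import Mathlib

open scoped BigOperators RealInnerProductSpace

noncomputable section

/-- Real value of a binary indicator. -/
def bval (b : Bool) : ℝ := if b then 1 else 0

/-- The alternative set `B_i = {d ∈ {0,1}^T : ∑_t d_t = ∑_t Y_{it}}`. -/
def altSet (T : ℕ) (Yi : Fin T → Bool) : Finset (Fin T → Bool) :=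
  Finset.univ.filter fun d => (∑ t, (d t).toNat) = ∑ t, (Yi t).toNat

/-- The conditional log-likelihood `log L(β)`. -/
def logL {n T p : ℕ} (X : Fin n → Fin T → EuclideanSpace ℝ (Fin p))
    (Y : Fin n → Fin T → Bool) (β : EuclideanSpace ℝ (Fin p)) : ℝ :=
  ∑ i, ((∑ t, bval (Y i t) * ⟪X i t, β⟫) -
    Real.log (∑ d ∈ altSet T (Y i), Real.exp (∑ t, bval (d t) * ⟪X i t, β⟫)))

/-- The conditional-logit (softmax) weights `w_i(d; β)`. -/
def cweight {n T p : ℕ} (X : Fin n → Fin T → EuclideanSpace ℝ (Fin p))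
    (Y : Fin n → Fin T → Bool) (i : Fin n) (d : Fin T → Bool)
    (β : EuclideanSpace ℝ (Fin p)) : ℝ :=
  Real.exp (∑ t, bval (d t) * ⟪X i t, β⟫) /
    ∑ f ∈ altSet T (Y i), Real.exp (∑ t, bval (f t) * ⟪X i t, β⟫)

/-- Row index set of the matrix in Assumption 1: pairs `(i, d)` with `d ∈ B_i`. -/
abbrev RowIdx (n T : ℕ) (Y : Fin n → Fin T → Bool) :=
  (i : Fin n) × {d : Fin T → Bool // d ∈ altSet T (Y i)}

/-- The matrix of Assumption 1, evaluated at `β`. -/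
def rowMat {n T p : ℕ} (X : Fin n → Fin T → EuclideanSpace ℝ (Fin p))
    (Y : Fin n → Fin T → Bool) (β : EuclideanSpace ℝ (Fin p)) :
    Matrix (RowIdx n T Y) (Fin p) ℝ :=
  fun r k =>
    (∑ t, bval (r.2.1 t) * X r.1 t k) -
      ∑ e ∈ altSet T (Y r.1),
        cweight X Y r.1 e β * ∑ t, bval (e t) * X r.1 t k

/-- Assumption 1 (full rank). -/
def Assumption1 {n T p : ℕ} (X : Fin n → Fin T → EuclideanSpace ℝ (Fin p))
    (Y : Fin n → Fin T → Bool) : Prop :=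
  ∀ β : EuclideanSpace ℝ (Fin p), (rowMat X Y β).rank = p

/-- Assumption 2 (no separation). -/
def Assumption2 {n T p : ℕ} (X : Fin n → Fin T → EuclideanSpace ℝ (Fin p))
    (Y : Fin n → Fin T → Bool) : Prop :=
  ¬ ∃ βstar : EuclideanSpace ℝ (Fin p), βstar ≠ 0 ∧
      ∀ i, ∀ d ∈ altSet T (Y i),
        0 ≤ ∑ t, (bval (d t) - bval (Y i t)) * ⟪X i t, βstar⟫

/-- The vectors `v_{i,d} = ∑_t (d_t − Y_{it}) X_{it}`. -/
def vvec {n T p : ℕ} (X : Fin n → Fin T → EuclideanSpace ℝ (Fin p))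
    (Y : Fin n → Fin T → Bool) (i : Fin n) (d : Fin T → Bool) :
    EuclideanSpace ℝ (Fin p) :=
  ∑ t, (bval (d t) - bval (Y i t)) • X i t

lemma amgm_lt {a b lam : ℝ} (ha : 0 < a) (hb : 0 < b) (hab : a ≠ b)
    (h0 : 0 < lam) (h1 : lam < 1) :
    a ^ lam * b ^ (1 - lam) < lam * a + (1 - lam) * b := by
  have hmem : a ∈ Set.Ioi (0:ℝ) := ha
  have hmem' : b ∈ Set.Ioi (0:ℝ) := hb
  have key := strictConcaveOn_log_Ioi.2 hmem hmem' hab h0 (show (0:ℝ) < 1 - lam by linarith) (by ring)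
  simp only [smul_eq_mul] at key
  have hcomb : 0 < lam * a + (1 - lam) * b := by nlinarith
  have : a ^ lam * b ^ (1 - lam) = Real.exp (lam * Real.log a + (1 - lam) * Real.log b) := by
    rw [Real.rpow_def_of_pos ha, Real.rpow_def_of_pos hb, ← Real.exp_add]
    ring_nf
  rw [this]
  calc Real.exp (lam * Real.log a + (1 - lam) * Real.log b)
      < Real.exp (Real.log (lam * a + (1 - lam) * b)) := Real.exp_lt_exp.2 key
    _ = lam * a + (1 - lam) * b := Real.exp_log hcomb

lemma amgm_le {a b lam : ℝ} (ha : 0 < a) (hb : 0 < b)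
    (h0 : 0 < lam) (h1 : lam < 1) :
    a ^ lam * b ^ (1 - lam) ≤ lam * a + (1 - lam) * b := by
  rcases eq_or_ne a b with rfl | hab
  · have h : lam + (1 - lam) = 1 := by ring
    have h2 : lam * a + (1 - lam) * a = a := by ring
    rw [← Real.rpow_add ha, h, Real.rpow_one, h2]
  · exact (amgm_lt ha hb hab h0 h1).le

section HolderAux
variable {ι : Type*} {s : Finset ι} {x y : ι → ℝ} {lam : ℝ}

lemma holder_aux (hs : s.Nonempty) (hx : ∀ d ∈ s, 0 < x d) (hy : ∀ d ∈ s, 0 < y d)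
    (h0 : 0 < lam) (h1 : lam < 1) :
    (∑ d ∈ s, x d ^ lam * y d ^ (1 - lam)) ≤
      (∑ d ∈ s, x d) ^ lam * (∑ d ∈ s, y d) ^ (1 - lam) ∧
    ((∃ d ∈ s, ∃ e ∈ s, x d * y e ≠ x e * y d) →
      (∑ d ∈ s, x d ^ lam * y d ^ (1 - lam)) <
        (∑ d ∈ s, x d) ^ lam * (∑ d ∈ s, y d) ^ (1 - lam)) := by
  set S1 := ∑ d ∈ s, x d with hS1def
  set S2 := ∑ d ∈ s, y d with hS2def
  have hS1 : 0 < S1 := Finset.sum_pos hx hs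
  have hS2 : 0 < S2 := Finset.sum_pos hy hs
  have hS1l : 0 < S1 ^ lam := Real.rpow_pos_of_pos hS1 _
  have hS2l : 0 < S2 ^ (1 - lam) := Real.rpow_pos_of_pos hS2 _
  -- termwise identity
  have hterm : ∀ d ∈ s, x d ^ lam * y d ^ (1 - lam) =
      ((x d / S1) ^ lam * (y d / S2) ^ (1 - lam)) * (S1 ^ lam * S2 ^ (1 - lam)) := by
    intro d hd
    rw [Real.div_rpow (hx d hd).le hS1.le, Real.div_rpow (hy d hd).le hS2.le]
    field_simp
  -- the normalized sum bound
  have hub : ∀ d ∈ s, (x d / S1) ^ lam * (y d / S2) ^ (1 - lam) ≤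
      lam * (x d / S1) + (1 - lam) * (y d / S2) := fun d hd =>
    amgm_le (div_pos (hx d hd) hS1) (div_pos (hy d hd) hS2) h0 h1
  have hrhs : ∑ d ∈ s, (lam * (x d / S1) + (1 - lam) * (y d / S2)) = 1 := by
    rw [Finset.sum_add_distrib, ← Finset.mul_sum, ← Finset.mul_sum,
      ← Finset.sum_div, ← Finset.sum_div, ← hS1def, ← hS2def,
      div_self hS1.ne', div_self hS2.ne']
    ring
  constructor
  · have hle : ∑ d ∈ s, (x d / S1) ^ lam * (y d / S2) ^ (1 - lam) ≤ 1 := by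
      have h := Finset.sum_le_sum hub
      rwa [hrhs] at h
    calc ∑ d ∈ s, x d ^ lam * y d ^ (1 - lam)
        = (∑ d ∈ s, (x d / S1) ^ lam * (y d / S2) ^ (1 - lam)) * (S1 ^ lam * S2 ^ (1 - lam)) := by
          rw [Finset.sum_mul]; exact Finset.sum_congr rfl hterm
      _ ≤ 1 * (S1 ^ lam * S2 ^ (1 - lam)) := by
          apply mul_le_mul_of_nonneg_right hle (by positivity)
      _ = S1 ^ lam * S2 ^ (1 - lam) := one_mul _
  · rintro ⟨d, hd, e, he, hcross⟩
    -- there is a j with x j / S1 ≠ y j / S2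
    have hj : ∃ j ∈ s, x j / S1 ≠ y j / S2 := by
      by_contra hall
      push_neg at hall
      apply hcross
      have hxd := hall d hd
      have hxe := hall e he
      rw [div_eq_div_iff hS1.ne' hS2.ne'] at hxd hxe
      refine mul_right_cancel₀ hS2.ne' ?_
      calc x d * y e * S2 = (x d * S2) * y e := by ring
        _ = (y d * S1) * y e := by rw [hxd]
        _ = (x e * S2) * y d := by rw [hxe]; ring
        _ = x e * y d * S2 := by ring
    obtain ⟨j, hjs, hjne⟩ := hj
    have hlt : ∑ d ∈ s, (x d / S1) ^ lam * (y d / S2) ^ (1 - lam) < 1 := by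
      have h := Finset.sum_lt_sum hub
        ⟨j, hjs, amgm_lt (div_pos (hx j hjs) hS1) (div_pos (hy j hjs) hS2) hjne h0 h1⟩
      rwa [hrhs] at h
    calc ∑ d ∈ s, x d ^ lam * y d ^ (1 - lam)
        = (∑ d ∈ s, (x d / S1) ^ lam * (y d / S2) ^ (1 - lam)) * (S1 ^ lam * S2 ^ (1 - lam)) := by
          rw [Finset.sum_mul]; exact Finset.sum_congr rfl hterm
      _ < 1 * (S1 ^ lam * S2 ^ (1 - lam)) := by
          apply mul_lt_mul_of_pos_right hlt (by positivity)
      _ = S1 ^ lam * S2 ^ (1 - lam) := one_mul _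

end HolderAux

lemma altSet_nonempty (T : ℕ) (Yi : Fin T → Bool) : (altSet T Yi).Nonempty :=
  ⟨Yi, by simp [altSet]⟩

lemma inner_sum_combo {T p : ℕ} (Z : Fin T → EuclideanSpace ℝ (Fin p)) (c : Fin T → ℝ)
    (a b : ℝ) (β₁ β₂ : EuclideanSpace ℝ (Fin p)) :
    ∑ t, c t * ⟪Z t, a • β₁ + b • β₂⟫ =
      a * ∑ t, c t * ⟪Z t, β₁⟫ + b * ∑ t, c t * ⟪Z t, β₂⟫ := by
  simp only [inner_add_right, real_inner_smul_right]
  rw [Finset.mul_sum, Finset.mul_sum, ← Finset.sum_add_distrib]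
  exact Finset.sum_congr rfl fun t _ => by ring

lemma inner_sum_sub {T p : ℕ} (Z : Fin T → EuclideanSpace ℝ (Fin p)) (c : Fin T → ℝ)
    (β₁ β₂ : EuclideanSpace ℝ (Fin p)) :
    ∑ t, c t * ⟪Z t, β₁ - β₂⟫ =
      (∑ t, c t * ⟪Z t, β₁⟫) - ∑ t, c t * ⟪Z t, β₂⟫ := by
  simp only [inner_sub_right, mul_sub]
  exact Finset.sum_sub_distrib _ _

/-- coordinate sum equals inner-product sum -/

lemma coord_sum_eq {T p : ℕ} (Z : Fin T → EuclideanSpace ℝ (Fin p)) (c : Fin T → ℝ)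
    (u : EuclideanSpace ℝ (Fin p)) :
    ∑ k, (∑ t, c t * Z t k) * u k = ∑ t, c t * ⟪Z t, u⟫ := by
  have hinner : ∀ t, ⟪Z t, u⟫ = ∑ k, Z t k * u k := by
    intro t
    simp [PiLp.inner_apply, RCLike.inner_apply, conj_trivial]
    exact Finset.sum_congr rfl fun _ _ => mul_comm _ _
  calc ∑ k, (∑ t, c t * Z t k) * u k
      = ∑ k, ∑ t, c t * Z t k * u k :=
        Finset.sum_congr rfl fun k _ => by rw [Finset.sum_mul]
    _ = ∑ t, ∑ k, c t * Z t k * u k := Finset.sum_comm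
    _ = ∑ t, c t * ∑ k, Z t k * u k := Finset.sum_congr rfl fun t _ => by
        rw [Finset.mul_sum]
        exact Finset.sum_congr rfl fun k _ => by ring
    _ = ∑ t, c t * ⟪Z t, u⟫ := Finset.sum_congr rfl fun t _ => by rw [hinner]

lemma cweight_sum {n T p : ℕ} (X : Fin n → Fin T → EuclideanSpace ℝ (Fin p))
    (Y : Fin n → Fin T → Bool) (i : Fin n) (β : EuclideanSpace ℝ (Fin p)) :
    ∑ e ∈ altSet T (Y i), cweight X Y i e β = 1 := by
  have hpos : 0 < ∑ f ∈ altSet T (Y i), Real.exp (∑ t, bval (f t) * ⟪X i t, β⟫) :=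
    Finset.sum_pos (fun f _ => Real.exp_pos _) (altSet_nonempty _ _)
  unfold cweight
  rw [← Finset.sum_div, div_self hpos.ne']

lemma exists_nonconst {n T p : ℕ} (X : Fin n → Fin T → EuclideanSpace ℝ (Fin p))
    (Y : Fin n → Fin T → Bool) (h1 : Assumption1 X Y)
    (u : EuclideanSpace ℝ (Fin p)) (hu : u ≠ 0) :
    ∃ i : Fin n, ∃ d ∈ altSet T (Y i), ∃ e ∈ altSet T (Y i),
      (∑ t, bval (d t) * ⟪X i t, u⟫) ≠ ∑ t, bval (e t) * ⟪X i t, u⟫ := by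
  classical
  set A := rowMat X Y 0 with hA
  have hrk : Module.finrank ℝ (LinearMap.range A.mulVecLin) = p := h1 0
  have h3 := LinearMap.finrank_range_add_finrank_ker A.mulVecLin
  rw [hrk, Module.finrank_pi, Fintype.card_fin] at h3
  have hker0 : Module.finrank ℝ (LinearMap.ker A.mulVecLin) = 0 := by omega
  have hker : LinearMap.ker A.mulVecLin = ⊥ := Submodule.finrank_eq_zero.mp hker0
  have hinj : Function.Injective A.mulVecLin := LinearMap.ker_eq_bot.mp hker
  have humv : A.mulVec (show Fin p → ℝ from u) ≠ 0 := by
    intro h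
    apply hu
    have h0 : A.mulVecLin (show Fin p → ℝ from u) = A.mulVecLin 0 := by
      rw [map_zero, Matrix.mulVecLin_apply, h]
    have h0' := hinj h0
    ext k
    simpa using congrFun h0' k
  obtain ⟨r, hr⟩ : ∃ r, A.mulVec (show Fin p → ℝ from u) r ≠ 0 := by
    by_contra hall
    push_neg at hall
    exact humv (funext hall)
  obtain ⟨i, d, hd⟩ := r
  refine ⟨i, d, hd, ?_⟩
  have hval : A.mulVec (show Fin p → ℝ from u) ⟨i, ⟨d, hd⟩⟩ =
      (∑ t, bval (d t) * ⟪X i t, u⟫) -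
        ∑ e ∈ altSet T (Y i), cweight X Y i e 0 * ∑ t, bval (e t) * ⟪X i t, u⟫ := by
    simp only [Matrix.mulVec, dotProduct, hA, rowMat]
    rw [Finset.sum_congr rfl (fun k (_ : k ∈ Finset.univ) => sub_mul _ _ (u k)),
      Finset.sum_sub_distrib, coord_sum_eq]
    congr 1
    rw [Finset.sum_congr rfl (fun k (_ : k ∈ Finset.univ) => Finset.sum_mul ..),
      Finset.sum_comm]
    refine Finset.sum_congr rfl fun e _ => ?_
    have hw : ∑ k, (cweight X Y i e 0 * ∑ t, bval (e t) * X i t k) * u k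
        = cweight X Y i e 0 * ∑ k, (∑ t, bval (e t) * X i t k) * u k := by
      rw [Finset.mul_sum]
      exact Finset.sum_congr rfl fun k _ => by ring
    rw [hw, coord_sum_eq, mul_comm]
  by_contra hall
  push_neg at hall
  apply hr
  rw [hval]
  have : ∀ e ∈ altSet T (Y i), cweight X Y i e 0 * ∑ t, bval (e t) * ⟪X i t, u⟫ =
      cweight X Y i e 0 * ∑ t, bval (d t) * ⟪X i t, u⟫ := fun e he => by
    rw [hall e he]
  rw [Finset.sum_congr rfl this, ← Finset.sum_mul, cweight_sum, one_mul, sub_self]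

lemma perI {n T p : ℕ} (X : Fin n → Fin T → EuclideanSpace ℝ (Fin p))
    (Y : Fin n → Fin T → Bool) (i : Fin n) (β₁ β₂ : EuclideanSpace ℝ (Fin p))
    {lam : ℝ} (h0 : 0 < lam) (h1 : lam < 1) :
    (lam * ((∑ t, bval (Y i t) * ⟪X i t, β₁⟫) -
        Real.log (∑ d ∈ altSet T (Y i), Real.exp (∑ t, bval (d t) * ⟪X i t, β₁⟫))) +
      (1 - lam) * ((∑ t, bval (Y i t) * ⟪X i t, β₂⟫) -
        Real.log (∑ d ∈ altSet T (Y i), Real.exp (∑ t, bval (d t) * ⟪X i t, β₂⟫))) ≤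
      (∑ t, bval (Y i t) * ⟪X i t, lam • β₁ + (1 - lam) • β₂⟫) -
        Real.log (∑ d ∈ altSet T (Y i),
          Real.exp (∑ t, bval (d t) * ⟪X i t, lam • β₁ + (1 - lam) • β₂⟫))) ∧
    ((∃ d ∈ altSet T (Y i), ∃ e ∈ altSet T (Y i),
        (∑ t, bval (d t) * ⟪X i t, β₁ - β₂⟫) ≠ ∑ t, bval (e t) * ⟪X i t, β₁ - β₂⟫) →
      lam * ((∑ t, bval (Y i t) * ⟪X i t, β₁⟫) -
        Real.log (∑ d ∈ altSet T (Y i), Real.exp (∑ t, bval (d t) * ⟪X i t, β₁⟫))) +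
      (1 - lam) * ((∑ t, bval (Y i t) * ⟪X i t, β₂⟫) -
        Real.log (∑ d ∈ altSet T (Y i), Real.exp (∑ t, bval (d t) * ⟪X i t, β₂⟫))) <
      (∑ t, bval (Y i t) * ⟪X i t, lam • β₁ + (1 - lam) • β₂⟫) -
        Real.log (∑ d ∈ altSet T (Y i),
          Real.exp (∑ t, bval (d t) * ⟪X i t, lam • β₁ + (1 - lam) • β₂⟫))) := by
  classical
  set B := altSet T (Y i) with hB
  have hBne : B.Nonempty := altSet_nonempty T (Y i)
  set x : (Fin T → Bool) → ℝ := fun d => Real.exp (∑ t, bval (d t) * ⟪X i t, β₁⟫) with hx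
  set y : (Fin T → Bool) → ℝ := fun d => Real.exp (∑ t, bval (d t) * ⟪X i t, β₂⟫) with hy
  have hxp : ∀ d ∈ B, 0 < x d := fun d _ => Real.exp_pos _
  have hyp : ∀ d ∈ B, 0 < y d := fun d _ => Real.exp_pos _
  have hS1 : 0 < ∑ d ∈ B, x d := Finset.sum_pos hxp hBne
  have hS2 : 0 < ∑ d ∈ B, y d := Finset.sum_pos hyp hBne
  -- the λ-combination sum is the Hölder LHS
  have hconv : ∀ d ∈ B, Real.exp (∑ t, bval (d t) * ⟪X i t, lam • β₁ + (1 - lam) • β₂⟫) =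
      x d ^ lam * y d ^ (1 - lam) := by
    intro d _
    rw [inner_sum_combo, mul_comm lam, mul_comm (1 - lam), Real.exp_add,
      Real.exp_mul, Real.exp_mul]
  have hSl : 0 < ∑ d ∈ B, Real.exp (∑ t, bval (d t) * ⟪X i t, lam • β₁ + (1 - lam) • β₂⟫) :=
    Finset.sum_pos (fun d _ => Real.exp_pos _) hBne
  have hSleq : (∑ d ∈ B, Real.exp (∑ t, bval (d t) * ⟪X i t, lam • β₁ + (1 - lam) • β₂⟫)) =
      ∑ d ∈ B, x d ^ lam * y d ^ (1 - lam) := Finset.sum_congr rfl hconv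
  have hlog : Real.log ((∑ d ∈ B, x d) ^ lam * (∑ d ∈ B, y d) ^ (1 - lam)) =
      lam * Real.log (∑ d ∈ B, x d) + (1 - lam) * Real.log (∑ d ∈ B, y d) := by
    rw [Real.log_mul (Real.rpow_pos_of_pos hS1 _).ne' (Real.rpow_pos_of_pos hS2 _).ne',
      Real.log_rpow hS1, Real.log_rpow hS2]
  have hlin : (∑ t, bval (Y i t) * ⟪X i t, lam • β₁ + (1 - lam) • β₂⟫) =
      lam * (∑ t, bval (Y i t) * ⟪X i t, β₁⟫) +
        (1 - lam) * ∑ t, bval (Y i t) * ⟪X i t, β₂⟫ :=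
    inner_sum_combo _ _ _ _ _ _
  obtain ⟨hle, hlt⟩ := holder_aux hBne hxp hyp h0 h1
  constructor
  · have hlogle : Real.log (∑ d ∈ B, Real.exp
        (∑ t, bval (d t) * ⟪X i t, lam • β₁ + (1 - lam) • β₂⟫)) ≤
        lam * Real.log (∑ d ∈ B, x d) + (1 - lam) * Real.log (∑ d ∈ B, y d) := by
      rw [← hlog, hSleq]
      exact Real.log_le_log (by rwa [hSleq] at hSl) hle
    linarith
  · intro hcross
    have hcross' : ∃ d ∈ B, ∃ e ∈ B, x d * y e ≠ x e * y d := by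
      obtain ⟨d, hd, e, he, hne⟩ := hcross
      refine ⟨d, hd, e, he, ?_⟩
      rw [hx, hy]
      simp only [← Real.exp_add]
      intro hsum
      rw [Real.exp_eq_exp] at hsum
      apply hne
      rw [inner_sum_sub, inner_sum_sub]
      linarith
    have hlogs : Real.log (∑ d ∈ B, Real.exp
        (∑ t, bval (d t) * ⟪X i t, lam • β₁ + (1 - lam) • β₂⟫)) <
        lam * Real.log (∑ d ∈ B, x d) + (1 - lam) * Real.log (∑ d ∈ B, y d) := by
      rw [← hlog, hSleq]
      exact Real.log_lt_log (by rwa [hSleq] at hSl) (hlt hcross')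
    linarith

/-- Under full rank, the conditional log-likelihood is strictly concave on `ℝ^p`. -/
theorem stmt9 {n T p : ℕ} (hn : 1 ≤ n) (hT : 1 ≤ T) (hp : 1 ≤ p)
    (X : Fin n → Fin T → EuclideanSpace ℝ (Fin p)) (Y : Fin n → Fin T → Bool)
    (h1 : Assumption1 X Y) :
    ∀ β₁ β₂ : EuclideanSpace ℝ (Fin p), β₁ ≠ β₂ → ∀ lam : ℝ, 0 < lam → lam < 1 →
      lam * logL X Y β₁ + (1 - lam) * logL X Y β₂ <
        logL X Y (lam • β₁ + (1 - lam) • β₂) := by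
  intro β₁ β₂ hneq lam hl0 hl1
  have hu : β₁ - β₂ ≠ 0 := sub_ne_zero.mpr hneq
  obtain ⟨i₀, d₀, hd₀, e₀, he₀, hc⟩ := exists_nonconst X Y h1 (β₁ - β₂) hu
  unfold logL
  rw [Finset.mul_sum, Finset.mul_sum, ← Finset.sum_add_distrib]
  exact Finset.sum_lt_sum (fun i _ => (perI X Y i β₁ β₂ hl0 hl1).1)
    ⟨i₀, Finset.mem_univ _, (perI X Y i₀ β₁ β₂ hl0 hl1).2 ⟨d₀, hd₀, e₀, he₀, hc⟩⟩
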